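/- Let K be a number field, let f : P^1 → P^1 be a rational map of degree d ≥ 2 defined over K, let α ∈ P^1(K), and let m ≥ 2. Set U_m = {α} ∪ f^{−1}(α) ∪ f^{−2}(α) ∪ … ∪ f^{−(m−1)}(α), and assume U_m ⊆ P^1(K). If dim(G_{f^m,β}) exists and equals 0 for every β ∈ U_m, then dim(G_{f,α}) exists and equals 0. -/

import Mathlib

open scoped Classical

noncomputable section

/-! ### Minkowski dimension machinery for groups of automorphisms of rooted trees

A rooted tree is presented by its levels `V 0, V 1, V 2, …` (with `V 0` the root level)
together with parent maps `V (n+1) → V n`.  An automorphism is a family of permutations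
of the levels commuting with the parent maps; it is in particular determined by a point of
`∀ k, Equiv.Perm (V k)`.  The restriction `r_n σ` of `σ` to the height-`n` subtree is the
tuple `(σ 0, …, σ n)`, and the natural metric is
`d(σ,τ) = inf { d!^{-(dⁿ-1)/(d-1)} : r_n σ = r_n τ }`. -/

/-- The exponent `(dⁿ - 1)/(d - 1) = 1 + d + ⋯ + d^(n-1)`. -/
def scaleExp (d n : ℕ) : ℕ := ∑ i ∈ Finset.range n, d ^ i

/-- The scale `ε_n = d!^{-(dⁿ-1)/(d-1)}`, i.e. `1/|Aut(Tₙᶜᵒᵐ)|`. -/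
def treeScale (d n : ℕ) : ℝ := ((d.factorial : ℝ) ^ scaleExp d n)⁻¹

/-- Two families of level permutations restrict to the same automorphism of the
height-`n` subtree. -/
def AgreeUpTo {V : ℕ → Type*} (n : ℕ) (σ τ : ∀ k, Equiv.Perm (V k)) : Prop :=
  ∀ k, k ≤ n → σ k = τ k

/-- The natural metric on automorphisms of a rooted `d`-ary tree:
`d(σ,τ) = inf { d!^{-(dⁿ-1)/(d-1)} : σ and τ agree on the height-n subtree }`. -/
def treeDist {V : ℕ → Type*} (d : ℕ) (σ τ : ∀ k, Equiv.Perm (V k)) : ℝ :=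
  sInf {x : ℝ | ∃ n : ℕ, AgreeUpTo n σ τ ∧ x = treeScale d n}

/-- `N_{ε_n}(G)`: the least number of balls of radius `ε_n = treeScale d n` needed to
cover `G`. -/
def coverNum {V : ℕ → Type*} (d : ℕ) (G : Set (∀ k, Equiv.Perm (V k))) (n : ℕ) : ℕ :=
  sInf {m : ℕ | ∃ s : Finset (∀ k, Equiv.Perm (V k)), s.card = m ∧
    G ⊆ ⋃ σ ∈ s, {τ | treeDist d σ τ ≤ treeScale d n}}

/-- The lower Minkowski dimension `liminf_{ε → 0} log N_ε(G) / log (1/ε)` (computed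
along the scales `ε_n` of the metric). -/
def dimLower {V : ℕ → Type*} (d : ℕ) (G : Set (∀ k, Equiv.Perm (V k))) : ℝ :=
  Filter.liminf
    (fun n : ℕ => Real.log (coverNum d G n : ℝ) / Real.log (1 / treeScale d n)) Filter.atTop

/-- The upper Minkowski dimension `limsup_{ε → 0} log N_ε(G) / log (1/ε)` (computed
along the scales `ε_n` of the metric). -/
def dimUpper {V : ℕ → Type*} (d : ℕ) (G : Set (∀ k, Equiv.Perm (V k))) : ℝ :=
  Filter.limsup
    (fun n : ℕ => Real.log (coverNum d G n : ℝ) / Real.log (1 / treeScale d n)) Filter.atTop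

/-- The Minkowski dimension of `G` exists and equals `x`. -/
def HasDim {V : ℕ → Type*} (d : ℕ) (G : Set (∀ k, Equiv.Perm (V k))) (x : ℝ) : Prop :=
  dimLower d G = x ∧ dimUpper d G = x

/-- `G` is closed for the natural metric. -/
def IsDistClosed {V : ℕ → Type*} (d : ℕ) (G : Set (∀ k, Equiv.Perm (V k))) : Prop :=
  ∀ σ, (∀ ε : ℝ, 0 < ε → ∃ τ ∈ G, treeDist d σ τ ≤ ε) → σ ∈ G

/-- The closure of `G` for the natural metric. -/
def distClosure {V : ℕ → Type*} (d : ℕ) (G : Set (∀ k, Equiv.Perm (V k))) :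
    Set (∀ k, Equiv.Perm (V k)) :=
  {σ | ∀ ε : ℝ, 0 < ε → ∃ τ ∈ G, treeDist d σ τ ≤ ε}

/-- `|r_n(G)|`: the cardinality of the restriction of `G` to the height-`n` subtree. -/
def levelCard {V : ℕ → Type*} (G : Set (∀ k, Equiv.Perm (V k))) (n : ℕ) : ℕ :=
  Nat.card ((fun (σ : ∀ k, Equiv.Perm (V k)) (k : Fin (n + 1)) => σ k.1) '' G)

end
noncomputable section

/-- A fixed algebraic closure `K̄` of `K`. -/
abbrev Kbar (K : Type*) [Field K] : Type _ := AlgebraicClosure K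

/-- The level-`n` vertices of the preimage tree of `α` under `φ`: the set
`φ^{-n}(α)`. -/
abbrev preV {Pts : Type*} (φ : Pts → Pts) (α : Pts) (n : ℕ) : Type _ :=
  {β : Pts // φ^[n] β = α}

/-- The parent map of the preimage tree: a vertex `β ∈ φ^{-(n+1)}(α)` is joined to
`φ(β) ∈ φ^{-n}(α)`. -/
def preParent {Pts : Type*} (φ : Pts → Pts) (α : Pts) (n : ℕ)
    (β : preV φ α (n + 1)) : preV φ α n :=
  ⟨φ β.1, by have h := β.2; rwa [Function.iterate_succ_apply] at h⟩

/-- The image `G_{φ,α}` of the arboreal Galois representation attached to `(φ, α)` over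
the base field `L` (an intermediate field of `K̄/K`): the set of families of level
permutations of the preimage tree induced by elements of `Gal(K̄/L)`, acting on points
via `act`. -/
def arbGal {K : Type*} [Field K] {Pts : Type*}
    (act : (Kbar K ≃ₐ[K] Kbar K) → Pts → Pts) (L : IntermediateField K (Kbar K))
    (φ : Pts → Pts) (α : Pts) : Set (∀ n, Equiv.Perm (preV φ α n)) :=
  {g | ∃ σ : Kbar K ≃ₐ[K] Kbar K, (∀ x ∈ L, σ x = x) ∧
    ∀ (n : ℕ) (β : preV φ α n), (g n β : Pts) = act σ (β : Pts)}

end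
noncomputable section

/-- The projective line `ℙ¹(L) = L ∪ {∞}`, with `none` the point at infinity. -/
abbrev P1 (L : Type*) := Option L

/-- The action on `ℙ¹(A)` of the rational map `f = p/q` with coefficients in `K`,
for an extension field `A` of `K`.  At a finite point `x` the value is `p(x)/q(x)`
(`∞` when `q(x) = 0`), and the value at `∞` is governed by the degrees of `p` and
`q` and their leading coefficients. -/
def ratAct {K : Type*} [Field K] (p q : Polynomial K)
    (A : Type*) [Field A] [Algebra K A] : P1 A → P1 A
  | some x =>
      if Polynomial.aeval x q = 0 then none
      else some (Polynomial.aeval x p / Polynomial.aeval x q)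
  | none =>
      if q.natDegree < p.natDegree then none
      else if p.natDegree < q.natDegree then some 0
      else some (algebraMap K A (p.leadingCoeff / q.leadingCoeff))

/-- The natural action of `Gal(K̄/K)` on `ℙ¹(K̄)`. -/
def galP1 {K : Type*} [Field K] (σ : Kbar K ≃ₐ[K] Kbar K) : P1 (Kbar K) → P1 (Kbar K) :=
  Option.map σ

/-- The inclusion `ℙ¹(K) ⊆ ℙ¹(K̄)`. -/
def P1K {K : Type*} [Field K] : P1 K → P1 (Kbar K) :=
  Option.map (algebraMap K (Kbar K))

/-- The set of `L`-rational points of `ℙ¹(K̄)`, for an intermediate field `L` of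
`K̄/K`. -/
def P1Rat {K : Type*} [Field K] (L : IntermediateField K (Kbar K)) : Set (P1 (Kbar K)) :=
  {β | β = none ∨ ∃ x ∈ L, β = some x}

/-- The Möbius transformation of `ℙ¹(F)` attached to `(a b; c e) ∈ PGL₂(F)`. -/
def moebius {F : Type*} [Field F] (a b c e : F) : P1 F → P1 F
  | some x => if c * x + e = 0 then none else some ((a * x + b) / (c * x + e))
  | none => if c = 0 then none else some (a / c)

/-- The normalizing constant `C_D = log(D!)/(D-1)`. -/
def Cconst (D : ℕ) : ℝ := Real.log (D.factorial : ℝ) / ((D : ℝ) - 1)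

/-- The ramification multiplicity at a point `γ ∈ ℙ¹(A)` of the degree-`d` rational
map `f = p/q` with coefficients in `K ⊆ A`:  at a finite point `γ` with `f(γ) = c`
finite it is the order of vanishing of `p - c·q` at `γ`; the cases involving `∞` are
handled using `q` and degrees.  A point is critical when this is at least `2`. -/
def multAt {K : Type*} [Field K] (p q : Polynomial K)
    (A : Type*) [Field A] [Algebra K A] (d : ℕ) : P1 A → ℕ
  | some x =>
      match ratAct p q A (some x) with
      | some c => ((p.map (algebraMap K A)) -
          Polynomial.C c * (q.map (algebraMap K A))).rootMultiplicity x
      | none => (q.map (algebraMap K A)).rootMultiplicity x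
  | none =>
      match ratAct p q A none with
      | some c => d - ((p.map (algebraMap K A)) -
          Polynomial.C c * (q.map (algebraMap K A))).natDegree
      | none => d - q.natDegree


/-! ### Auxiliary development -/

section MetricAux

variable {V : ℕ → Type*} {d : ℕ} {σ τ : ∀ k, Equiv.Perm (V k)}

lemma one_le_fact_real (d : ℕ) : (1 : ℝ) ≤ (d.factorial : ℝ) := by
  exact_mod_cast Nat.one_le_iff_ne_zero.2 (Nat.factorial_ne_zero d)

lemma treeScale_pos (d n : ℕ) : 0 < treeScale d n := by
  have h1 : (0:ℝ) < (d.factorial : ℝ) := lt_of_lt_of_le one_pos (one_le_fact_real d)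
  exact inv_pos.2 (pow_pos h1 _)

lemma scaleExp_strictMono (d : ℕ) (hd : 1 ≤ d) : StrictMono (scaleExp d) := by
  apply strictMono_nat_of_lt_succ
  intro n
  have : scaleExp d (n+1) = scaleExp d n + d ^ n := Finset.sum_range_succ _ _
  rw [this]
  exact Nat.lt_add_of_pos_right (Nat.pow_pos hd)

lemma treeScale_strictAnti (hd : 2 ≤ d) : StrictAnti (treeScale d) := by
  intro a b hab
  have hF : (1:ℝ) < (d.factorial : ℝ) := by
    have : 2 ≤ d.factorial := le_trans hd (Nat.self_le_factorial d)
    exact_mod_cast this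
  have hm := scaleExp_strictMono d (le_trans one_le_two hd) hab
  have := pow_lt_pow_right₀ hF hm
  exact inv_strictAnti₀ (pow_pos (lt_trans one_pos hF) _) this

lemma treeScale_antitone (hd : 2 ≤ d) : Antitone (treeScale d) :=
  (treeScale_strictAnti hd).antitone

lemma agreeUpTo_mono {n k : ℕ} (h : AgreeUpTo n σ τ) (hk : k ≤ n) : AgreeUpTo k σ τ :=
  fun i hi => h i (le_trans hi hk)

lemma agreeUpTo_zero [Subsingleton (V 0)] : AgreeUpTo 0 σ τ := by
  intro k hk
  interval_cases k
  exact Equiv.ext fun x => Subsingleton.elim _ _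

lemma treeDist_bddBelow : BddBelow {x : ℝ | ∃ n : ℕ, AgreeUpTo n σ τ ∧ x = treeScale d n} := by
  refine ⟨0, ?_⟩
  rintro x ⟨n, -, rfl⟩
  exact (treeScale_pos d n).le

lemma treeDist_le_of_agree {n : ℕ} (h : AgreeUpTo n σ τ) :
    treeDist d σ τ ≤ treeScale d n :=
  csInf_le treeDist_bddBelow ⟨n, h, rfl⟩

lemma agree_of_treeDist_le [Subsingleton (V 0)] (hd : 2 ≤ d) {j : ℕ}
    (h : treeDist d σ τ ≤ treeScale d j) : AgreeUpTo j σ τ := by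
  classical
  by_contra hj
  have hex : ∃ n : ℕ, ¬ AgreeUpTo n σ τ := ⟨j, hj⟩
  set k₀ := Nat.find hex with hk₀
  have hknot : ¬ AgreeUpTo k₀ σ τ := Nat.find_spec hex
  have hkle : k₀ ≤ j := Nat.find_le hj
  have hk1 : 1 ≤ k₀ := by
    rcases Nat.eq_zero_or_pos k₀ with h0 | h1
    · exact absurd (h0 ▸ agreeUpTo_zero) hknot
    · exact h1
  have hlb : treeScale d (k₀ - 1) ≤ treeDist d σ τ := by
    have hne : Set.Nonempty {x : ℝ | ∃ n : ℕ, AgreeUpTo n σ τ ∧ x = treeScale d n} :=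
      ⟨treeScale d 0, 0, agreeUpTo_zero, rfl⟩
    unfold treeDist
    apply le_csInf hne
    rintro x ⟨n, hn, rfl⟩
    have hnk : n < k₀ := by
      by_contra hge
      exact hknot (agreeUpTo_mono hn (le_of_not_gt hge))
    exact treeScale_antitone hd (Nat.le_sub_one_of_lt hnk)
  have : treeScale d (k₀ - 1) ≤ treeScale d j := le_trans hlb h
  have hlt : k₀ - 1 < j := lt_of_lt_of_le (Nat.sub_lt hk1 one_pos) hkle
  exact absurd this (not_le.2 (treeScale_strictAnti hd hlt))

/-- Restriction to the height-`n` subtree. -/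
def resTree (n : ℕ) (σ : ∀ k, Equiv.Perm (V k)) : ∀ k : Fin (n + 1), Equiv.Perm (V k.1) :=
  fun k => σ k.1

lemma levelCard_eq (G : Set (∀ k, Equiv.Perm (V k))) (n : ℕ) :
    levelCard G n = Nat.card (resTree n '' G) := rfl

end MetricAux

section CoverAux

variable {V : ℕ → Type*} {d : ℕ}

lemma exists_cover_finset [∀ k, Finite (V k)] (G : Set (∀ k, Equiv.Perm (V k))) (n : ℕ) :
    ∃ s : Finset (∀ k, Equiv.Perm (V k)), s.card ≤ levelCard G n ∧
      G ⊆ ⋃ σ ∈ s, {τ | treeDist d σ τ ≤ treeScale d n} := by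
  classical
  have hfinR : (resTree n '' G).Finite := Set.toFinite _
  haveI := hfinR.fintype
  have hmem : ∀ r : resTree n '' G, ∃ g, g ∈ G ∧ resTree n g = (r : ∀ k : Fin (n+1), Equiv.Perm (V k.1)) :=
    fun r => r.2
  choose f hf1 hf2 using hmem
  refine ⟨Finset.image f Finset.univ, ?_, ?_⟩
  · calc (Finset.image f Finset.univ).card ≤ Finset.univ.card := Finset.card_image_le
      _ = Nat.card (resTree n '' G) := by
          rw [Finset.card_univ, Nat.card_eq_fintype_card]
      _ = levelCard G n := rfl
  · intro g hg
    set r : resTree n '' G := ⟨resTree n g, Set.mem_image_of_mem _ hg⟩ with hr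
    have hagree : AgreeUpTo n (f r) g := by
      intro k hk
      have := congrFun (hf2 r) ⟨k, Nat.lt_succ_of_le hk⟩
      exact this
    refine Set.mem_iUnion₂.2 ⟨f r, ?_, treeDist_le_of_agree hagree⟩
    exact Finset.mem_image.2 ⟨r, Finset.mem_univ _, rfl⟩

lemma coverNum_le_levelCard [∀ k, Finite (V k)] (G : Set (∀ k, Equiv.Perm (V k))) (n : ℕ) :
    coverNum d G n ≤ levelCard G n := by
  obtain ⟨s, hcard, hcov⟩ := exists_cover_finset (d := d) G n
  exact le_trans (Nat.sInf_le ⟨s, rfl, hcov⟩) hcard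

lemma coverNum_mem [∀ k, Finite (V k)] (G : Set (∀ k, Equiv.Perm (V k))) (n : ℕ) :
    ∃ s : Finset (∀ k, Equiv.Perm (V k)), s.card = coverNum d G n ∧
      G ⊆ ⋃ σ ∈ s, {τ | treeDist d σ τ ≤ treeScale d n} := by
  obtain ⟨s0, -, hcov0⟩ := exists_cover_finset (d := d) G n
  have hne : {m : ℕ | ∃ s : Finset (∀ k, Equiv.Perm (V k)), s.card = m ∧
      G ⊆ ⋃ σ ∈ s, {τ | treeDist d σ τ ≤ treeScale d n}}.Nonempty := ⟨s0.card, s0, rfl, hcov0⟩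
  exact Nat.sInf_mem hne

lemma one_le_coverNum [∀ k, Finite (V k)] {G : Set (∀ k, Equiv.Perm (V k))}
    (hG : G.Nonempty) (n : ℕ) : 1 ≤ coverNum d G n := by
  obtain ⟨s, hcard, hcov⟩ := coverNum_mem (d := d) G n
  rcases Nat.eq_zero_or_pos (coverNum d G n) with h0 | h1
  · exfalso
    rw [h0, Finset.card_eq_zero] at hcard
    obtain ⟨g, hg⟩ := hG
    have := hcov hg
    rw [hcard] at this
    simpa using this
  · exact h1

lemma levelCard_le_coverNum [Subsingleton (V 0)] [∀ k, Finite (V k)] (hd : 2 ≤ d)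
    (G : Set (∀ k, Equiv.Perm (V k))) (n : ℕ) :
    levelCard G n ≤ coverNum d G n := by
  obtain ⟨s, hcard, hcov⟩ := coverNum_mem (d := d) G n
  have hsub : resTree n '' G ⊆ resTree n '' (s : Set (∀ k, Equiv.Perm (V k))) := by
    rintro r ⟨g, hg, rfl⟩
    obtain ⟨σ, hσs, hdist⟩ := Set.mem_iUnion₂.1 (hcov hg)
    have hagree := agree_of_treeDist_le hd hdist
    exact ⟨σ, hσs, funext fun k => hagree k.1 (Nat.lt_succ_iff.1 k.2)⟩
  calc levelCard G n ≤ Nat.card (resTree n '' (s : Set (∀ k, Equiv.Perm (V k)))) := by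
        rw [levelCard_eq]
        exact Nat.card_mono (Set.toFinite _) hsub
    _ ≤ Nat.card (s : Set (∀ k, Equiv.Perm (V k))) := Nat.card_image_le (Set.toFinite _)
    _ = s.card := by simp [Nat.card_eq_finsetCard]
    _ = coverNum d G n := hcard

end CoverAux

section CardAux

lemma nat_card_image_le_of_factor {A B C : Type*} (G : Set A) (f : A → B) (u : A → C)
    (h : ∀ a ∈ G, ∀ b ∈ G, u a = u b → f a = f b) (hfin : (u '' G).Finite) :
    Nat.card (f '' G) ≤ Nat.card (u '' G) := by
  classical
  haveI := hfin.to_subtype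
  have hmem : ∀ y : u '' G, ∃ x, x ∈ G ∧ u x = (y : C) := fun y => y.2
  choose w hw1 hw2 using hmem
  have hF : ∀ y : u '' G, f (w y) ∈ f '' G := fun y => ⟨w y, hw1 y, rfl⟩
  have hsurj : Function.Surjective (fun y : u '' G => (⟨f (w y), hF y⟩ : f '' G)) := by
    rintro ⟨x, a, ha, rfl⟩
    have hmem2 : u a ∈ u '' G := ⟨a, ha, rfl⟩
    refine ⟨⟨u a, hmem2⟩, Subtype.ext ?_⟩
    exact h _ (hw1 _) a ha (hw2 ⟨u a, hmem2⟩)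
  exact Nat.card_le_card_of_surjective _ hsurj

end CardAux

section CodeAux

lemma exists_code {X Y : Type*} [Finite X] (π : X → Y) {D : ℕ}
    (hfib : ∀ y, Nat.card {x // π x = y} ≤ D) :
    ∃ c : X → Fin D, ∀ x x', π x = π x' → c x = c x' → x = x' := by
  classical
  haveI := Fintype.ofFinite X
  set enum : X → ℕ := fun x => (Fintype.equivFin X x : ℕ) with henum
  have henum_inj : Function.Injective enum := fun a b hab =>
    (Fintype.equivFin X).injective (Fin.ext hab)
  have hcard : ∀ x : X, (Finset.univ.filter fun w => π w = π x).card ≤ D := by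
    intro x
    have h := hfib (π x)
    rwa [Nat.card_eq_fintype_card, Fintype.card_subtype] at h
  have hlt : ∀ x : X, (Finset.univ.filter fun w => π w = π x ∧ enum w < enum x).card < D := by
    intro x
    have hsub : (Finset.univ.filter fun w => π w = π x ∧ enum w < enum x) ⊆
        (Finset.univ.filter fun w => π w = π x).erase x := by
      intro w hw
      simp only [Finset.mem_filter, Finset.mem_univ, true_and] at hw
      refine Finset.mem_erase.2 ⟨?_, Finset.mem_filter.2 ⟨Finset.mem_univ _, hw.1⟩⟩
      rintro rfl; exact lt_irrefl _ hw.2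
    have hx : x ∈ Finset.univ.filter fun w => π w = π x :=
      Finset.mem_filter.2 ⟨Finset.mem_univ _, rfl⟩
    calc (Finset.univ.filter fun w => π w = π x ∧ enum w < enum x).card
        ≤ ((Finset.univ.filter fun w => π w = π x).erase x).card := Finset.card_le_card hsub
      _ < (Finset.univ.filter fun w => π w = π x).card := Finset.card_erase_lt_of_mem hx
      _ ≤ D := hcard x
  refine ⟨fun x => ⟨_, hlt x⟩, ?_⟩
  intro x x' hπ hc
  have hc' : (Finset.univ.filter fun w => π w = π x ∧ enum w < enum x).card =
      (Finset.univ.filter fun w => π w = π x' ∧ enum w < enum x').card := congrArg Fin.val hc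
  rcases lt_trichotomy (enum x) (enum x') with hlt' | heq | hgt
  · exfalso
    have hsub : (Finset.univ.filter fun w => π w = π x ∧ enum w < enum x) ⊆
        (Finset.univ.filter fun w => π w = π x' ∧ enum w < enum x') := by
      intro w hw
      simp only [Finset.mem_filter, Finset.mem_univ, true_and] at hw ⊢
      exact ⟨by rw [← hπ]; exact hw.1, hw.2.trans hlt'⟩
    have hxmem : x ∈ Finset.univ.filter fun w => π w = π x' ∧ enum w < enum x' := by
      simp only [Finset.mem_filter, Finset.mem_univ, true_and]
      exact ⟨hπ, hlt'⟩
    have hxnot : x ∉ Finset.univ.filter fun w => π w = π x ∧ enum w < enum x := by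
      intro hmem
      exact absurd (Finset.mem_filter.1 hmem).2.2 (lt_irrefl _)
    have := Finset.card_lt_card ((Finset.ssubset_iff_of_subset hsub).2 ⟨x, hxmem, hxnot⟩)
    omega
  · exact henum_inj heq
  · exfalso
    have hsub : (Finset.univ.filter fun w => π w = π x' ∧ enum w < enum x') ⊆
        (Finset.univ.filter fun w => π w = π x ∧ enum w < enum x) := by
      intro w hw
      simp only [Finset.mem_filter, Finset.mem_univ, true_and] at hw ⊢
      exact ⟨by rw [hπ]; exact hw.1, hw.2.trans hgt⟩
    have hxmem : x' ∈ Finset.univ.filter fun w => π w = π x ∧ enum w < enum x := by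
      simp only [Finset.mem_filter, Finset.mem_univ, true_and]
      exact ⟨hπ.symm, hgt⟩
    have hxnot : x' ∉ Finset.univ.filter fun w => π w = π x' ∧ enum w < enum x' := by
      intro hmem
      exact absurd (Finset.mem_filter.1 hmem).2.2 (lt_irrefl _)
    have := Finset.card_lt_card ((Finset.ssubset_iff_of_subset hsub).2 ⟨x', hxmem, hxnot⟩)
    omega

lemma nat_card_le_of_fibers {X Y : Type*} [Finite X] [Finite Y] (π : X → Y) {D : ℕ}
    (hfib : ∀ y, Nat.card {x // π x = y} ≤ D) : Nat.card X ≤ Nat.card Y * D := by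
  obtain ⟨c, hc⟩ := exists_code π hfib
  have hinj : Function.Injective (fun x => (π x, c x)) := fun a b hab =>
    hc a b (congrArg Prod.fst hab) (congrArg Prod.snd hab)
  calc Nat.card X ≤ Nat.card (Y × Fin D) := Nat.card_le_card_of_injective _ hinj
    _ = Nat.card Y * D := by simp

end CodeAux

section TreeAux

variable {Pts : Type*}

lemma nat_card_le_one {X : Type*} [Subsingleton X] : Nat.card X ≤ 1 := by
  rcases isEmpty_or_nonempty X with h | h
  · simp [Nat.card_of_isEmpty]
  · obtain ⟨x⟩ := h
    haveI : Unique X := uniqueOfSubsingleton x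
    simp [Nat.card_unique]

lemma perm_subsingleton {X : Type*} [Subsingleton X] : Subsingleton (Equiv.Perm X) :=
  ⟨fun a b => Equiv.ext fun x => Subsingleton.elim _ _⟩

lemma preV_zero_subsingleton (φ' : Pts → Pts) (r : Pts) : Subsingleton (preV φ' r 0) := by
  refine ⟨fun a b => Subtype.ext ?_⟩
  have ha := a.2
  have hb := b.2
  simp only [Function.iterate_zero_apply] at ha hb
  rw [ha, hb]

lemma preV_setFinite (φ' : Pts → Pts) (hfib : ∀ y : Pts, {x | φ' x = y}.Finite) (r : Pts) :
    ∀ n, {x | φ'^[n] x = r}.Finite := by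
  intro n
  induction n with
  | zero => exact Set.Finite.subset (Set.finite_singleton r) (by intro x hx; simpa using hx)
  | succ n ih =>
      have heq : {x | φ'^[n+1] x = r} = ⋃ y ∈ {x | φ'^[n] x = r}, {x | φ' x = y} := by
        ext x
        simp only [Set.mem_setOf_eq, Set.mem_iUnion]
        constructor
        · intro hx
          exact ⟨φ' x, by rwa [Function.iterate_succ_apply] at hx, rfl⟩
        · rintro ⟨y, hy, rfl⟩
          rwa [Function.iterate_succ_apply]
      rw [heq]
      exact Set.Finite.biUnion ih fun y _ => hfib y

lemma preV_finite (φ' : Pts → Pts) (hfib : ∀ y : Pts, {x | φ' x = y}.Finite) (r : Pts)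
    (n : ℕ) : Finite (preV φ' r n) :=
  (preV_setFinite φ' hfib r n).to_subtype

lemma preParent_fiber_card (φ' : Pts → Pts) (r : Pts) {D : ℕ}
    (hfib : ∀ y : Pts, {x | φ' x = y}.Finite) (hcnt : ∀ y : Pts, {x | φ' x = y}.ncard ≤ D)
    {k : ℕ} (y : preV φ' r k) :
    Nat.card {x : preV φ' r (k+1) // preParent φ' r k x = y} ≤ D := by
  haveI : Finite {z : Pts // φ' z = (y : Pts)} := (hfib (y : Pts)).to_subtype
  have hinj : Function.Injective
      (fun x : {x : preV φ' r (k+1) // preParent φ' r k x = y} =>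
        (⟨(x : preV φ' r (k+1)).1, congrArg Subtype.val x.2⟩ : {z : Pts // φ' z = (y : Pts)})) := by
    intro a b hab
    have h : ((a : preV φ' r (k+1)) : Pts) = ((b : preV φ' r (k+1)) : Pts) :=
      congrArg (fun t : {z : Pts // φ' z = (y : Pts)} => (t : Pts)) hab
    exact Subtype.ext (Subtype.ext h)
  calc Nat.card {x : preV φ' r (k+1) // preParent φ' r k x = y}
      ≤ Nat.card {z : Pts // φ' z = (y : Pts)} := Nat.card_le_card_of_injective _ hinj
    _ = {z : Pts | φ' z = (y : Pts)}.ncard := Nat.card_coe_set_eq _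
    _ ≤ D := hcnt _

lemma preV_card_le (φ' : Pts → Pts) (r : Pts) {D : ℕ}
    (hfib : ∀ y : Pts, {x | φ' x = y}.Finite) (hcnt : ∀ y : Pts, {x | φ' x = y}.ncard ≤ D) :
    ∀ n, Nat.card (preV φ' r n) ≤ D ^ n := by
  haveI : ∀ n, Finite (preV φ' r n) := preV_finite φ' hfib r
  intro n
  induction n with
  | zero =>
      haveI := preV_zero_subsingleton φ' r
      simpa using nat_card_le_one (X := preV φ' r 0)
  | succ n ih =>
      calc Nat.card (preV φ' r (n+1)) ≤ Nat.card (preV φ' r n) * D :=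
            nat_card_le_of_fibers (preParent φ' r n)
              (fun y => preParent_fiber_card φ' r hfib hcnt y)
        _ ≤ D ^ n * D := Nat.mul_le_mul_right D ih
        _ = D ^ (n + 1) := (pow_succ D n).symm

lemma levelCard_le_pow (φ' : Pts → Pts) (r : Pts) {D : ℕ} (hD : 1 ≤ D)
    (hfib : ∀ y : Pts, {x | φ' x = y}.Finite) (hcnt : ∀ y : Pts, {x | φ' x = y}.ncard ≤ D)
    (G : Set (∀ k, Equiv.Perm (preV φ' r k)))
    (hG : ∀ g ∈ G, ∀ (k : ℕ) (x : preV φ' r (k+1)),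
      preParent φ' r k (g (k+1) x) = g k (preParent φ' r k x)) :
    ∀ j, levelCard G j ≤ D ^ (D * scaleExp D j) := by
  haveI : ∀ n, Finite (preV φ' r n) := preV_finite φ' hfib r
  intro j
  induction j with
  | zero =>
      haveI : ∀ k : Fin 1, Subsingleton (Equiv.Perm (preV φ' r k.1)) := by
        intro k
        have hk : (k : ℕ) = 0 := Nat.lt_one_iff.1 k.2
        rw [hk]
        haveI := preV_zero_subsingleton φ' r
        exact perm_subsingleton
      haveI : Subsingleton (∀ k : Fin 1, Equiv.Perm (preV φ' r k.1)) := inferInstance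
      haveI : Subsingleton (resTree 0 '' G : Set (∀ k : Fin 1, Equiv.Perm (preV φ' r k.1))) :=
        inferInstance
      calc levelCard G 0 ≤ 1 := nat_card_le_one
        _ ≤ D ^ (D * scaleExp D 0) := Nat.one_le_iff_ne_zero.2 (pow_ne_zero _ (by omega))
  | succ j ih =>
      obtain ⟨c, hc⟩ := exists_code (preParent φ' r j)
        (fun y => preParent_fiber_card φ' r hfib hcnt y)
      set u : (∀ k, Equiv.Perm (preV φ' r k)) →
          ((∀ k : Fin (j+1), Equiv.Perm (preV φ' r k.1)) × (preV φ' r (j+1) → Fin D)) :=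
        fun g => (resTree j g, fun x => c (g (j+1) x)) with hu
      have hfac : ∀ a ∈ G, ∀ b ∈ G, u a = u b → resTree (j+1) a = resTree (j+1) b := by
        intro a ha b hb huab
        have h1 : resTree j a = resTree j b := congrArg Prod.fst huab
        have h2 : ∀ x, c (a (j+1) x) = c (b (j+1) x) := fun x =>
          congrFun (congrArg Prod.snd huab) x
        have hj' : ∀ k : ℕ, k ≤ j → a k = b k := fun k hk =>
          congrFun h1 ⟨k, Nat.lt_succ_of_le hk⟩
        have hlast : a (j+1) = b (j+1) := by
          apply Equiv.ext
          intro x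
          apply hc
          · rw [hG a ha j x, hG b hb j x, hj' j le_rfl]
          · exact h2 x
        funext k
        rcases Nat.lt_succ_iff_lt_or_eq.1 k.2 with hk | hk
        · exact hj' k.1 (Nat.lt_succ_iff.1 hk)
        · show a k.1 = b k.1
          rw [hk]
          exact hlast
      have step1 : Nat.card (resTree (j+1) '' G) ≤ Nat.card (u '' G) :=
        nat_card_image_le_of_factor G _ u hfac (Set.toFinite _)
      have hmem : ∀ y : u '' G, y.1.1 ∈ resTree j '' G := by
        rintro ⟨y, g, hg, rfl⟩
        exact ⟨g, hg, rfl⟩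
      have hinj : Function.Injective
          (fun y : u '' G =>
            ((⟨y.1.1, hmem y⟩ : resTree j '' G), y.1.2)) := by
        intro y z hyz
        apply Subtype.ext
        have h1 := congrArg
          (fun t : (↥(resTree j '' G) × (preV φ' r (j+1) → Fin D)) =>
            ((t.1 : ∀ k : Fin (j+1), Equiv.Perm (preV φ' r k.1)))) hyz
        have h2 := congrArg Prod.snd hyz
        exact Prod.ext h1 h2
      have step2 : Nat.card (u '' G) ≤ Nat.card (resTree j '' G) * D ^ (D ^ (j+1)) := by
        calc Nat.card (u '' G)
            ≤ Nat.card (↥(resTree j '' G) × (preV φ' r (j+1) → Fin D)) :=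
              Nat.card_le_card_of_injective _ hinj
          _ = Nat.card (resTree j '' G) * D ^ Nat.card (preV φ' r (j+1)) := by
              rw [Nat.card_prod, Nat.card_fun]
              simp
          _ ≤ Nat.card (resTree j '' G) * D ^ (D ^ (j+1)) := by
              exact Nat.mul_le_mul_left _
                (Nat.pow_le_pow_right hD (preV_card_le φ' r hfib hcnt (j+1)))
      have hexp : D * scaleExp D (j+1) = D * scaleExp D j + D ^ (j+1) := by
        have hs : scaleExp D (j+1) = scaleExp D j + D ^ j := Finset.sum_range_succ _ _
        rw [hs, Nat.mul_add, ← pow_succ']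
      calc levelCard G (j+1) = Nat.card (resTree (j+1) '' G) := rfl
        _ ≤ Nat.card (u '' G) := step1
        _ ≤ Nat.card (resTree j '' G) * D ^ (D ^ (j+1)) := step2
        _ ≤ D ^ (D * scaleExp D j) * D ^ (D ^ (j+1)) :=
            Nat.mul_le_mul_right _ ih
        _ = D ^ (D * scaleExp D (j+1)) := by rw [hexp, pow_add]; ring

end TreeAux

section PolyAux

variable {K : Type*} [Field K] (p q : Polynomial K) {A : Type*} [Field A] [Algebra K A]

lemma ratAct_some_def (x : A) : ratAct p q A (some x) =
    if Polynomial.aeval x q = 0 then none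
    else some (Polynomial.aeval x p / Polynomial.aeval x q) := rfl

lemma ratAct_none_def : ratAct p q A none =
    if q.natDegree < p.natDegree then none
    else if p.natDegree < q.natDegree then some 0
    else some (algebraMap K A (p.leadingCoeff / q.leadingCoeff)) := rfl

lemma rootSet_finite_card (r : Polynomial A) (hr : r ≠ 0) :
    {t : A | r.eval t = 0}.Finite ∧ {t : A | r.eval t = 0}.ncard ≤ r.natDegree := by
  classical
  have hset : {t : A | r.eval t = 0} = ↑r.roots.toFinset := by
    ext t
    simp [Polynomial.mem_roots, hr, Polynomial.IsRoot.def]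
  constructor
  · rw [hset]; exact r.roots.toFinset.finite_toSet
  · rw [hset, Set.ncard_coe_finset]
    exact le_trans (Multiset.toFinset_card_le _) (Polynomial.card_roots' r)

lemma ratAct_fiber {d : ℕ} (hd : 2 ≤ d) (hf : IsCoprime p q)
    (hdeg : max p.natDegree q.natDegree = d) (γ : P1 A) :
    {x : P1 A | ratAct p q A x = γ}.Finite ∧ {x : P1 A | ratAct p q A x = γ}.ncard ≤ d := by
  classical
  have hinj : Function.Injective (algebraMap K A) := (algebraMap K A).injective
  set π := algebraMap K A with hπ
  set pb := p.map π with hpb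
  set qb := q.map π with hqb
  have haevalp : ∀ t : A, Polynomial.aeval t p = pb.eval t := fun t => by
    rw [hpb, Polynomial.aeval_def, Polynomial.eval_map]
  have haevalq : ∀ t : A, Polynomial.aeval t q = qb.eval t := fun t => by
    rw [hqb, Polynomial.aeval_def, Polynomial.eval_map]
  have hq : q ≠ 0 := by
    rintro rfl
    have hu : IsUnit p := isCoprime_zero_right.mp hf
    have h0 : p.natDegree = 0 := Polynomial.natDegree_eq_zero_of_isUnit hu
    rw [h0] at hdeg
    simp at hdeg
    omega
  have hqb0 : qb ≠ 0 := fun h => hq ((Polynomial.map_eq_zero_iff hinj).1 h)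
  have hpdeg : pb.natDegree = p.natDegree := Polynomial.natDegree_map_eq_of_injective hinj p
  have hqdeg : qb.natDegree = q.natDegree := Polynomial.natDegree_map_eq_of_injective hinj q
  have hpd : p.natDegree ≤ d := hdeg ▸ le_max_left _ _
  have hqd : q.natDegree ≤ d := hdeg ▸ le_max_right _ _
  cases γ with
  | none =>
      have hfin := rootSet_finite_card qb hqb0
      by_cases hlt : q.natDegree < p.natDegree
      · have hsub : {x : P1 A | ratAct p q A x = none} ⊆
            insert none (some '' {t : A | qb.eval t = 0}) := by
          intro x hx
          cases x with
          | none => exact Set.mem_insert _ _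
          | some t =>
              have hx' : ratAct p q A (some t) = none := hx
              rw [ratAct_some_def] at hx'
              by_cases h0 : Polynomial.aeval t q = 0
              · exact Set.mem_insert_of_mem _ ⟨t, show Polynomial.eval t qb = 0 by
                  rw [← haevalq]; exact h0, rfl⟩
              · rw [if_neg h0] at hx'; cases hx'
        have hfin2 : (insert (none : P1 A) (some '' {t : A | qb.eval t = 0})).Finite :=
          Set.Finite.insert _ (Set.Finite.image _ hfin.1)
        refine ⟨hfin2.subset hsub, ?_⟩
        have hqdd : q.natDegree < d := lt_of_lt_of_le hlt hpd
        calc {x : P1 A | ratAct p q A x = none}.ncard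
            ≤ (insert (none : P1 A) (some '' {t : A | qb.eval t = 0})).ncard :=
              Set.ncard_le_ncard hsub hfin2
          _ ≤ (some '' {t : A | qb.eval t = 0}).ncard + 1 := Set.ncard_insert_le _ _
          _ = {t : A | qb.eval t = 0}.ncard + 1 := by
              rw [Set.ncard_image_of_injective _ (Option.some_injective A)]
          _ ≤ d := by
              have h2 := hfin.2; rw [hqdeg] at h2; omega
      · have hqdd : q.natDegree = d := by
          rw [max_eq_right (not_lt.1 hlt)] at hdeg; exact hdeg
        have hsub : {x : P1 A | ratAct p q A x = none} ⊆
            some '' {t : A | qb.eval t = 0} := by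
          intro x hx
          cases x with
          | none =>
              have hx' : ratAct p q A none = none := hx
              rw [ratAct_none_def, if_neg hlt] at hx'
              split_ifs at hx' <;> simp at hx'
          | some t =>
              have hx' : ratAct p q A (some t) = none := hx
              rw [ratAct_some_def] at hx'
              by_cases h0 : Polynomial.aeval t q = 0
              · exact ⟨t, show Polynomial.eval t qb = 0 by rw [← haevalq]; exact h0, rfl⟩
              · rw [if_neg h0] at hx'; cases hx'
        have hfin2 : ((some : A → P1 A) '' {t : A | qb.eval t = 0}).Finite :=
          Set.Finite.image _ hfin.1
        refine ⟨hfin2.subset hsub, ?_⟩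
        calc {x : P1 A | ratAct p q A x = none}.ncard
            ≤ ((some : A → P1 A) '' {t : A | qb.eval t = 0}).ncard :=
              Set.ncard_le_ncard hsub hfin2
          _ = {t : A | qb.eval t = 0}.ncard := by
              rw [Set.ncard_image_of_injective _ (Option.some_injective A)]
          _ ≤ d := by
              have h2 := hfin.2; rw [hqdeg, hqdd] at h2; exact h2
  | some c =>
      set rb := pb - Polynomial.C c * qb with hrb
      have hcop : IsCoprime pb qb := by
        have h := hf.map (Polynomial.mapRingHom π)
        simpa using h
      have hrb0 : rb ≠ 0 := by
        intro h
        have hpbeq : pb = Polynomial.C c * qb := sub_eq_zero.1 h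
        have hdvd : qb ∣ pb := hpbeq ▸ dvd_mul_left qb (Polynomial.C c)
        have hu : IsUnit qb := hcop.isUnit_of_dvd' hdvd dvd_rfl
        have h1 : q.natDegree = 0 := by
          rw [← hqdeg]; exact Polynomial.natDegree_eq_zero_of_isUnit hu
        have h2 : p.natDegree = 0 := by
          have hle : pb.natDegree ≤ qb.natDegree := by
            rw [hpbeq]; exact Polynomial.natDegree_C_mul_le _ _
          rw [hpdeg, hqdeg, h1] at hle
          omega
        rw [h1, h2] at hdeg
        simp at hdeg
        omega
      have hfinr := rootSet_finite_card rb hrb0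
      have hrd : rb.natDegree ≤ d := by
        refine le_trans (Polynomial.natDegree_sub_le _ _) ?_
        refine max_le (by rw [hpdeg]; exact hpd) ?_
        exact le_trans (Polynomial.natDegree_C_mul_le _ _) (by rw [hqdeg]; exact hqd)
      have hsub0 : ∀ t : A, ratAct p q A (some t) = some c → rb.eval t = 0 := by
        intro t hx'
        rw [ratAct_some_def] at hx'
        by_cases h0 : Polynomial.aeval t q = 0
        · rw [if_pos h0] at hx'; cases hx'
        · rw [if_neg h0] at hx'
          have hv : Polynomial.aeval t p / Polynomial.aeval t q = c :=
            Option.some_injective _ hx'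
          rw [div_eq_iff h0] at hv
          rw [hrb]
          simp only [Polynomial.eval_sub, Polynomial.eval_mul, Polynomial.eval_C]
          rw [← haevalp, ← haevalq, hv]
          ring
      by_cases hnone : ratAct p q A none = some c
      · have hcoeff : rb.coeff d = 0 := by
          rw [ratAct_none_def] at hnone
          by_cases h1 : q.natDegree < p.natDegree
          · rw [if_pos h1] at hnone; cases hnone
          rw [if_neg h1] at hnone
          by_cases h2 : p.natDegree < q.natDegree
          · rw [if_pos h2] at hnone
            have hc0 : c = 0 := (Option.some_injective _ hnone).symm
            have hqdd : q.natDegree = d := by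
              rw [max_eq_right (le_of_lt h2)] at hdeg; exact hdeg
            have hplt : pb.natDegree < d := by rw [hpdeg]; omega
            rw [hrb]
            simp only [Polynomial.coeff_sub, Polynomial.coeff_C_mul]
            rw [hc0, Polynomial.coeff_eq_zero_of_natDegree_lt hplt]
            ring
          · rw [if_neg h2] at hnone
            have hceq : c = π (p.leadingCoeff / q.leadingCoeff) :=
              (Option.some_injective _ hnone).symm
            have hpq : p.natDegree = q.natDegree := le_antisymm (not_lt.1 h1) (not_lt.1 h2)
            have hpdd : p.natDegree = d := by
              rw [max_eq_left hpq.ge] at hdeg; exact hdeg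
            have hqdd : q.natDegree = d := by omega
            have hlcq : π q.leadingCoeff ≠ 0 := by
              rw [map_ne_zero_iff _ hinj]
              exact Polynomial.leadingCoeff_ne_zero.2 hq
            rw [hrb]
            simp only [Polynomial.coeff_sub, Polynomial.coeff_C_mul, Polynomial.coeff_map]
            rw [hceq, map_div₀]
            have hp' : p.coeff d = p.leadingCoeff := by
              rw [← hpdd, Polynomial.coeff_natDegree]
            have hq' : q.coeff d = q.leadingCoeff := by
              rw [← hqdd, Polynomial.coeff_natDegree]
            have hcp : pb.coeff d = π p.leadingCoeff := by
              rw [hpb, Polynomial.coeff_map, hp']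
            have hcq : qb.coeff d = π q.leadingCoeff := by
              rw [hqb, Polynomial.coeff_map, hq']
            rw [hcp, hcq, div_mul_cancel₀ _ hlcq]
            ring
        have hltd : rb.natDegree < d := by
          rcases lt_or_eq_of_le hrd with h | h
          · exact h
          · exfalso
            have hlc : rb.coeff rb.natDegree ≠ 0 := by
              rw [Polynomial.coeff_natDegree]
              exact Polynomial.leadingCoeff_ne_zero.2 hrb0
            rw [h] at hlc
            exact hlc hcoeff
        have hsub : {x : P1 A | ratAct p q A x = some c} ⊆
            insert none (some '' {t : A | rb.eval t = 0}) := by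
          intro x hx
          cases x with
          | none => exact Set.mem_insert _ _
          | some t => exact Set.mem_insert_of_mem _ ⟨t, hsub0 t hx, rfl⟩
        have hfin2 : (insert (none : P1 A) (some '' {t : A | rb.eval t = 0})).Finite :=
          Set.Finite.insert _ (Set.Finite.image _ hfinr.1)
        refine ⟨hfin2.subset hsub, ?_⟩
        calc {x : P1 A | ratAct p q A x = some c}.ncard
            ≤ (insert (none : P1 A) (some '' {t : A | rb.eval t = 0})).ncard :=
              Set.ncard_le_ncard hsub hfin2
          _ ≤ (some '' {t : A | rb.eval t = 0}).ncard + 1 := Set.ncard_insert_le _ _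
          _ = {t : A | rb.eval t = 0}.ncard + 1 := by
              rw [Set.ncard_image_of_injective _ (Option.some_injective A)]
          _ ≤ d := by
              have h2 := hfinr.2; omega
      · have hsub : {x : P1 A | ratAct p q A x = some c} ⊆
            some '' {t : A | rb.eval t = 0} := by
          intro x hx
          cases x with
          | none => exact absurd hx hnone
          | some t => exact ⟨t, hsub0 t hx, rfl⟩
        have hfin2 : ((some : A → P1 A) '' {t : A | rb.eval t = 0}).Finite :=
          Set.Finite.image _ hfinr.1
        refine ⟨hfin2.subset hsub, ?_⟩
        calc {x : P1 A | ratAct p q A x = some c}.ncard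
            ≤ ((some : A → P1 A) '' {t : A | rb.eval t = 0}).ncard :=
              Set.ncard_le_ncard hsub hfin2
          _ = {t : A | rb.eval t = 0}.ncard := by
              rw [Set.ncard_image_of_injective _ (Option.some_injective A)]
          _ ≤ d := le_trans hfinr.2 hrd

end PolyAux

section GaloisAux

variable {K : Type*} [Field K]

lemma galP1_ratAct (p q : Polynomial K) (σ : Kbar K ≃ₐ[K] Kbar K) (x : P1 (Kbar K)) :
    galP1 σ (ratAct p q (Kbar K) x) = ratAct p q (Kbar K) (galP1 σ x) := by
  cases x with
  | none =>
      show galP1 σ (ratAct p q (Kbar K) none) = ratAct p q (Kbar K) none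
      rw [ratAct_none_def]
      split_ifs with h1 h2
      · rfl
      · show Option.map σ (some 0) = some 0
        simp
      · show Option.map σ (some _) = some _
        simp [AlgEquiv.commutes]
  | some t =>
      show Option.map σ (ratAct p q (Kbar K) (some t)) = ratAct p q (Kbar K) (some (σ t))
      rw [ratAct_some_def, ratAct_some_def]
      have hqev : Polynomial.aeval (σ t) q = σ (Polynomial.aeval t q) :=
        Polynomial.aeval_algHom_apply (σ : Kbar K →ₐ[K] Kbar K) t q
      have hpev : Polynomial.aeval (σ t) p = σ (Polynomial.aeval t p) :=
        Polynomial.aeval_algHom_apply (σ : Kbar K →ₐ[K] Kbar K) t p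
      by_cases h0 : Polynomial.aeval t q = 0
      · rw [if_pos h0, if_pos (by rw [hqev, h0, map_zero])]
        rfl
      · rw [if_neg h0, if_neg (fun h => h0 (σ.injective (by
          rw [← hqev, h, map_zero])))]
        show some (σ (Polynomial.aeval t p / Polynomial.aeval t q)) = some _
        rw [map_div₀, ← hpev, ← hqev]

lemma galP1_P1K (σ : Kbar K ≃ₐ[K] Kbar K) (α : P1 K) : galP1 σ (P1K α) = P1K α := by
  cases α with
  | none => rfl
  | some a =>
      show Option.map σ (some (algebraMap K (Kbar K) a)) = some (algebraMap K (Kbar K) a)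
      simp [AlgEquiv.commutes]

lemma galP1_rat {β : P1 (Kbar K)} (hβ : β ∈ P1Rat (K := K) ⊥) (σ : Kbar K ≃ₐ[K] Kbar K) :
    galP1 σ β = β := by
  rcases hβ with h | ⟨x, hx, rfl⟩
  · rw [h]; rfl
  · obtain ⟨y, rfl⟩ := IntermediateField.mem_bot.1 hx
    show Option.map σ (some (algebraMap K (Kbar K) y)) = some (algebraMap K (Kbar K) y)
    simp [AlgEquiv.commutes]

lemma galP1_iterate (φ' : P1 (Kbar K) → P1 (Kbar K))
    (hcomm : ∀ (σ : Kbar K ≃ₐ[K] Kbar K) x, galP1 σ (φ' x) = φ' (galP1 σ x))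
    (σ : Kbar K ≃ₐ[K] Kbar K) (n : ℕ) (x : P1 (Kbar K)) :
    galP1 σ (φ'^[n] x) = φ'^[n] (galP1 σ x) :=
  (Function.Semiconj.iterate_right (hcomm σ) n) x

lemma galP1_symm_cancel (σ : Kbar K ≃ₐ[K] Kbar K) (v : P1 (Kbar K)) :
    galP1 σ.symm (galP1 σ v) = v := by
  cases v with
  | none => rfl
  | some a =>
      show Option.map σ.symm (Option.map σ (some a)) = some a
      simp

lemma galP1_cancel_symm (σ : Kbar K ≃ₐ[K] Kbar K) (v : P1 (Kbar K)) :
    galP1 σ (galP1 σ.symm v) = v := by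
  cases v with
  | none => rfl
  | some a =>
      show Option.map σ (Option.map σ.symm (some a)) = some a
      simp

/-- The permutation of `φ'^{-n}(r)` induced by a Galois automorphism `σ`. -/
def treePerm (φ' : P1 (Kbar K) → P1 (Kbar K)) (r : P1 (Kbar K))
    (hcomm : ∀ (σ : Kbar K ≃ₐ[K] Kbar K) x, galP1 σ (φ' x) = φ' (galP1 σ x))
    (hr : ∀ σ : Kbar K ≃ₐ[K] Kbar K, galP1 σ r = r)
    (σ : Kbar K ≃ₐ[K] Kbar K) (n : ℕ) : Equiv.Perm (preV φ' r n) where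
  toFun x := ⟨galP1 σ x.1, by rw [← galP1_iterate φ' hcomm σ n x.1, x.2, hr]⟩
  invFun x := ⟨galP1 σ.symm x.1, by rw [← galP1_iterate φ' hcomm σ.symm n x.1, x.2, hr]⟩
  left_inv x := Subtype.ext (galP1_symm_cancel σ x.1)
  right_inv x := Subtype.ext (galP1_cancel_symm σ x.1)

lemma treePerm_coe (φ' : P1 (Kbar K) → P1 (Kbar K)) (r : P1 (Kbar K)) (hcomm : ∀ (σ : Kbar K ≃ₐ[K] Kbar K) x, galP1 σ (φ' x) = φ' (galP1 σ x))
    (hr : ∀ σ : Kbar K ≃ₐ[K] Kbar K, galP1 σ r = r)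
    (σ : Kbar K ≃ₐ[K] Kbar K) (n : ℕ) (x : preV φ' r n) :
    ((treePerm φ' r hcomm hr σ n x : preV φ' r n) : P1 (Kbar K)) = galP1 σ x.1 := rfl

lemma arbGal_eq_range (φ' : P1 (Kbar K) → P1 (Kbar K)) (r : P1 (Kbar K)) (hcomm : ∀ (σ : Kbar K ≃ₐ[K] Kbar K) x, galP1 σ (φ' x) = φ' (galP1 σ x))
    (hr : ∀ σ : Kbar K ≃ₐ[K] Kbar K, galP1 σ r = r) :
    arbGal (K := K) galP1 ⊥ φ' r =
      Set.range (fun σ : Kbar K ≃ₐ[K] Kbar K => fun n => treePerm φ' r hcomm hr σ n) := by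
  ext g
  constructor
  · rintro ⟨σ, -, hσ⟩
    refine ⟨σ, ?_⟩
    funext n
    exact Equiv.ext fun x => Subtype.ext (hσ n x).symm
  · rintro ⟨σ, rfl⟩
    refine ⟨σ, ?_, fun n β => rfl⟩
    intro x hx
    obtain ⟨y, rfl⟩ := IntermediateField.mem_bot.1 hx
    exact σ.commutes y

lemma arbGal_parent (φ' : P1 (Kbar K) → P1 (Kbar K)) (r : P1 (Kbar K))
    (hcomm : ∀ (σ : Kbar K ≃ₐ[K] Kbar K) x, galP1 σ (φ' x) = φ' (galP1 σ x)) :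
    ∀ g ∈ arbGal (K := K) galP1 ⊥ φ' r, ∀ (k : ℕ) (x : preV φ' r (k+1)),
      preParent φ' r k (g (k+1) x) = g k (preParent φ' r k x) := by
  rintro g ⟨σ, -, hσ⟩ k x
  apply Subtype.ext
  show φ' ((g (k+1) x : P1 (Kbar K))) = ((g k (preParent φ' r k x)) : P1 (Kbar K))
  rw [hσ, hσ]
  show φ' (galP1 σ x.1) = galP1 σ (φ' x.1)
  exact (hcomm σ x.1).symm

lemma arbGal_nonempty (φ' : P1 (Kbar K) → P1 (Kbar K)) (r : P1 (Kbar K)) (hcomm : ∀ (σ : Kbar K ≃ₐ[K] Kbar K) x, galP1 σ (φ' x) = φ' (galP1 σ x))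
    (hr : ∀ σ : Kbar K ≃ₐ[K] Kbar K, galP1 σ r = r) :
    (arbGal (K := K) galP1 ⊥ φ' r).Nonempty := by
  rw [arbGal_eq_range φ' r hcomm hr]
  exact Set.range_nonempty _

end GaloisAux

section DecompAux

variable {K : Type*} [Field K]

lemma levelCard_decomp (p q : Polynomial K) (α : P1 K) (m n J : ℕ) (hm : 0 < m)
    (hnJ : n ≤ m * J)
    (hrβ : ∀ β : P1 (Kbar K), (∃ ℓ, ℓ < m ∧ (ratAct p q (Kbar K))^[ℓ] β = P1K α) →
      ∀ σ : Kbar K ≃ₐ[K] Kbar K, galP1 σ β = β)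
    (hfin : ∀ γ : P1 (Kbar K), {x | ratAct p q (Kbar K) x = γ}.Finite)
    [Fintype {β : P1 (Kbar K) // ∃ ℓ, ℓ < m ∧ (ratAct p q (Kbar K))^[ℓ] β = P1K α}] :
    levelCard (arbGal (K := K) galP1 ⊥ (ratAct p q (Kbar K)) (P1K α)) n ≤
      ∏ β : {β : P1 (Kbar K) // ∃ ℓ, ℓ < m ∧ (ratAct p q (Kbar K))^[ℓ] β = P1K α},
        levelCard (arbGal (K := K) galP1 ⊥ ((ratAct p q (Kbar K))^[m]) β.1) J := by
  classical
  set φ := ratAct p q (Kbar K) with hφ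
  have hcomm : ∀ (σ : Kbar K ≃ₐ[K] Kbar K) x, galP1 σ (φ x) = φ (galP1 σ x) :=
    fun σ x => galP1_ratAct p q σ x
  have hcommΦ : ∀ (σ : Kbar K ≃ₐ[K] Kbar K) x, galP1 σ (φ^[m] x) = φ^[m] (galP1 σ x) :=
    fun σ x => galP1_iterate φ hcomm σ m x
  have hrα : ∀ σ : Kbar K ≃ₐ[K] Kbar K, galP1 σ (P1K α) = P1K α := fun σ => galP1_P1K σ α
  have hfinΦ : ∀ γ : P1 (Kbar K), {x | φ^[m] x = γ}.Finite := fun γ => preV_setFinite φ hfin γ m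
  haveI hITβ : ∀ (β : P1 (Kbar K)) (k : ℕ), Finite (preV (φ^[m]) β k) :=
    fun β => preV_finite _ hfinΦ β
  haveI hITα : ∀ k, Finite (preV φ (P1K α) k) := preV_finite _ hfin _
  set B := {β : P1 (Kbar K) // ∃ ℓ, ℓ < m ∧ φ^[ℓ] β = P1K α} with hB
  rw [arbGal_eq_range φ (P1K α) hcomm hrα, levelCard_eq]
  set F : (Kbar K ≃ₐ[K] Kbar K) → (∀ k : Fin (n+1), Equiv.Perm (preV φ (P1K α) k.1)) :=
    fun σ => resTree n (fun k => treePerm φ (P1K α) hcomm hrα σ k) with hF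
  have himg : resTree n '' Set.range (fun σ : Kbar K ≃ₐ[K] Kbar K =>
      fun k => treePerm φ (P1K α) hcomm hrα σ k) = Set.range F := by
    rw [← Set.range_comp]
    rfl
  rw [himg]
  set ρ : ∀ β : B, (Kbar K ≃ₐ[K] Kbar K) →
      (∀ k : Fin (J+1), Equiv.Perm (preV (φ^[m]) β.1 k.1)) :=
    fun β σ => resTree J (fun k => treePerm (φ^[m]) β.1 hcommΦ
      (fun σ' => hrβ β.1 β.2 σ') σ k) with hρ
  set bg : (Kbar K ≃ₐ[K] Kbar K) →
      (∀ β : B, ∀ k : Fin (J+1), Equiv.Perm (preV (φ^[m]) β.1 k.1)) :=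
    fun σ => fun β => ρ β σ with hbg
  have hfac : ∀ σ σ' : Kbar K ≃ₐ[K] Kbar K, bg σ = bg σ' → F σ = F σ' := by
    intro σ σ' h
    funext k
    apply Equiv.ext
    intro x
    apply Subtype.ext
    show galP1 σ x.1 = galP1 σ' x.1
    have hℓm : (k : ℕ) % m < m := Nat.mod_lt _ hm
    have hjJ : (k : ℕ) / m < J + 1 := by
      have h1 : (k : ℕ) ≤ m * J := le_trans (Nat.lt_succ_iff.1 k.2) hnJ
      have h2 : (k : ℕ) / m ≤ J := by
        calc (k : ℕ) / m ≤ (m * J) / m := Nat.div_le_div_right h1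
          _ = J := Nat.mul_div_cancel_left J hm
      omega
    have hβα : φ^[(k : ℕ) % m] (φ^[m * ((k : ℕ) / m)] x.1) = P1K α := by
      rw [← Function.iterate_add_apply]
      have hh : (k : ℕ) % m + m * ((k : ℕ) / m) = (k : ℕ) := Nat.mod_add_div _ _
      rw [hh]
      exact x.2
    set β : B := ⟨φ^[m * ((k : ℕ) / m)] x.1, ⟨(k : ℕ) % m, hℓm, hβα⟩⟩ with hβ
    have hxβ : (φ^[m])^[(k : ℕ) / m] x.1 = β.1 := by
      rw [← Function.iterate_mul]
    have hcomp := congrFun (congrFun h β) ⟨(k : ℕ) / m, hjJ⟩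
    exact congrArg (fun e : Equiv.Perm (preV (φ^[m]) β.1 ((k : ℕ) / m)) =>
      ((e ⟨x.1, hxβ⟩ : preV (φ^[m]) β.1 ((k : ℕ) / m)) : P1 (Kbar K))) hcomp
  have stepA : Nat.card (Set.range F) ≤ Nat.card (Set.range bg) := by
    rw [← Set.image_univ, ← Set.image_univ (f := bg)]
    exact nat_card_image_le_of_factor _ F bg (fun a _ b _ hab => hfac a b hab) (Set.toFinite _)
  haveI : ∀ β : B, Finite (Set.range (ρ β)) := fun β => (Set.toFinite _).to_subtype
  have stepB : Nat.card (Set.range bg) ≤ ∏ β : B, Nat.card (Set.range (ρ β)) := by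
    have hmem : ∀ (y : Set.range bg) (β : B), y.1 β ∈ Set.range (ρ β) := by
      rintro ⟨y, σ, rfl⟩ β
      exact ⟨σ, rfl⟩
    have hinj : Function.Injective (fun y : Set.range bg =>
        (fun β : B => (⟨y.1 β, hmem y β⟩ : Set.range (ρ β)))) := by
      intro y z hyz
      apply Subtype.ext
      funext β
      exact congrArg Subtype.val (congrFun hyz β)
    calc Nat.card (Set.range bg) ≤ Nat.card (∀ β : B, Set.range (ρ β)) :=
          Nat.card_le_card_of_injective _ hinj
      _ = ∏ β : B, Nat.card (Set.range (ρ β)) := Nat.card_pi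
  have hfactor : ∀ β : B, Nat.card (Set.range (ρ β)) =
      levelCard (arbGal (K := K) galP1 ⊥ (φ^[m]) β.1) J := by
    intro β
    rw [arbGal_eq_range (φ^[m]) β.1 hcommΦ (fun σ' => hrβ β.1 β.2 σ'), levelCard_eq,
      ← Set.range_comp]
    rfl
  have hres : Nat.card (Set.range F) ≤
      ∏ β : B, levelCard (arbGal (K := K) galP1 ⊥ (φ^[m]) β.1) J :=
    calc Nat.card (Set.range F) ≤ Nat.card (Set.range bg) := stepA
      _ ≤ ∏ β : B, Nat.card (Set.range (ρ β)) := stepB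
      _ = ∏ β : B, levelCard (arbGal (K := K) galP1 ⊥ (φ^[m]) β.1) J :=
          Finset.prod_congr rfl (fun β _ => hfactor β)
  exact hres.trans (le_of_eq (by congr!))

end DecompAux

section NumAux

lemma log_one_div_treeScale (D j : ℕ) :
    Real.log (1 / treeScale D j) = (scaleExp D j : ℝ) * Real.log (D.factorial : ℝ) := by
  rw [treeScale, one_div, inv_inv, Real.log_pow]

lemma log_factorial_pos {D : ℕ} (hD : 2 ≤ D) : 0 < Real.log (D.factorial : ℝ) := by
  apply Real.log_pos
  have h : 2 ≤ D.factorial := le_trans hD (Nat.self_le_factorial D)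
  exact_mod_cast lt_of_lt_of_le one_lt_two (by exact_mod_cast h)

lemma scaleExp_le_pow {D : ℕ} (hD : 2 ≤ D) (j : ℕ) : scaleExp D j ≤ D ^ j := by
  induction j with
  | zero => simp [scaleExp]
  | succ j ih =>
      have h : scaleExp D (j+1) = scaleExp D j + D ^ j := Finset.sum_range_succ _ _
      have h2 : D ^ j * 2 ≤ D ^ j * D := Nat.mul_le_mul_left (D ^ j) hD
      have h3 : D ^ (j+1) = D ^ j * D := pow_succ D j
      omega

lemma pow_le_scaleExp {d : ℕ} {n : ℕ} (hn : 1 ≤ n) : d ^ (n-1) ≤ scaleExp d n := by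
  have hmem : n - 1 ∈ Finset.range n := Finset.mem_range.2 (by omega)
  exact Finset.single_le_sum (fun i _ => Nat.zero_le _) hmem

lemma scaleExp_pos {d : ℕ} (hd : 1 ≤ d) {n : ℕ} (hn : 1 ≤ n) : 0 < scaleExp d n :=
  lt_of_lt_of_le (Nat.pow_pos hd) (pow_le_scaleExp hn)

lemma div_add_one_tendsto (m : ℕ) (hm : 0 < m) :
    Filter.Tendsto (fun n : ℕ => n / m + 1) Filter.atTop Filter.atTop := by
  apply Filter.tendsto_atTop_atTop.2
  intro b
  refine ⟨b * m, fun a ha => ?_⟩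
  have hb : b ≤ a / m := (Nat.le_div_iff_mul_le hm).2 ha
  omega

end NumAux
end
theorem arboreal_iterate_small_criterion {K : Type*} [Field K] [NumberField K] {d : ℕ}
    (hd : 2 ≤ d) (p q : Polynomial K) (hf : IsCoprime p q)
    (hdeg : max p.natDegree q.natDegree = d) (α : P1 K) (m : ℕ) (hm : 2 ≤ m)
    (hUrat : ∀ ℓ, ℓ < m → ∀ β : P1 (Kbar K),
      (ratAct p q (Kbar K))^[ℓ] β = P1K α → β ∈ P1Rat (K := K) ⊥)
    (hsmall : ∀ ℓ, ℓ < m → ∀ β : P1 (Kbar K),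
      (ratAct p q (Kbar K))^[ℓ] β = P1K α →
        HasDim (d ^ m) (arbGal (K := K) galP1 ⊥ ((ratAct p q (Kbar K))^[m]) β) 0) :
    HasDim d (arbGal (K := K) galP1 ⊥ (ratAct p q (Kbar K)) (P1K α)) 0 := by
  classical
  set φ := ratAct p q (Kbar K) with hφ
  set D := d ^ m with hDdef
  have hm0 : 0 < m := by omega
  have hd1 : 1 ≤ d := by omega
  have hD2 : 2 ≤ D := by
    have h1 : 2 ^ 1 ≤ 2 ^ m := Nat.pow_le_pow_right (by norm_num) (by omega)
    have h2 : 2 ^ m ≤ d ^ m := Nat.pow_le_pow_left hd m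
    rw [hDdef]
    omega
  have hD1 : (1 : ℕ) ≤ D := by omega
  have hfin : ∀ γ : P1 (Kbar K), {x | φ x = γ}.Finite :=
    fun γ => (ratAct_fiber p q hd hf hdeg γ).1
  have hcnt : ∀ γ : P1 (Kbar K), {x | φ x = γ}.ncard ≤ d :=
    fun γ => (ratAct_fiber p q hd hf hdeg γ).2
  have hcomm : ∀ (σ : Kbar K ≃ₐ[K] Kbar K) x, galP1 σ (φ x) = φ (galP1 σ x) :=
    fun σ x => galP1_ratAct p q σ x
  have hcommΦ : ∀ (σ : Kbar K ≃ₐ[K] Kbar K) x, galP1 σ (φ^[m] x) = φ^[m] (galP1 σ x) :=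
    fun σ x => galP1_iterate φ hcomm σ m x
  have hrα : ∀ σ : Kbar K ≃ₐ[K] Kbar K, galP1 σ (P1K α) = P1K α := fun σ => galP1_P1K σ α
  have hfinΦ : ∀ γ : P1 (Kbar K), {x | φ^[m] x = γ}.Finite :=
    fun γ => preV_setFinite φ hfin γ m
  have hcntΦ : ∀ γ : P1 (Kbar K), {x | φ^[m] x = γ}.ncard ≤ D := by
    intro γ
    calc {x | φ^[m] x = γ}.ncard = Nat.card (preV φ γ m) := (Nat.card_coe_set_eq _).symm
      _ ≤ D := preV_card_le φ γ hfin hcnt m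
  haveI hITα : ∀ k, Finite (preV φ (P1K α) k) := preV_finite φ hfin (P1K α)
  haveI hITβ : ∀ (β : P1 (Kbar K)) (k : ℕ), Finite (preV (φ^[m]) β k) :=
    fun β => preV_finite _ hfinΦ β
  have hBset : {β : P1 (Kbar K) | ∃ ℓ, ℓ < m ∧ φ^[ℓ] β = P1K α}.Finite := by
    have hE : {β : P1 (Kbar K) | ∃ ℓ, ℓ < m ∧ φ^[ℓ] β = P1K α} =
        ⋃ ℓ ∈ Set.Iio m, {β : P1 (Kbar K) | φ^[ℓ] β = P1K α} := by
      ext β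
      simp only [Set.mem_setOf_eq, Set.mem_iUnion, Set.mem_Iio, exists_prop]
    rw [hE]
    exact Set.Finite.biUnion (Set.finite_Iio m) (fun ℓ _ => preV_setFinite φ hfin (P1K α) ℓ)
  haveI hBfin : Finite {β : P1 (Kbar K) // ∃ ℓ, ℓ < m ∧ φ^[ℓ] β = P1K α} := hBset.to_subtype
  haveI hBfintype : Fintype {β : P1 (Kbar K) // ∃ ℓ, ℓ < m ∧ φ^[ℓ] β = P1K α} :=
    Fintype.ofFinite _
  have hrβ : ∀ β : P1 (Kbar K), (∃ ℓ, ℓ < m ∧ φ^[ℓ] β = P1K α) →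
      ∀ σ : Kbar K ≃ₐ[K] Kbar K, galP1 σ β = β := by
    rintro β ⟨ℓ, hℓ, hβ⟩ σ
    exact galP1_rat (hUrat ℓ hℓ β hβ) σ
  set B := {β : P1 (Kbar K) // ∃ ℓ, ℓ < m ∧ φ^[ℓ] β = P1K α} with hB
  set Gα := arbGal (K := K) galP1 ⊥ φ (P1K α) with hGα
  set Gb : ∀ β : B, Set (∀ k, Equiv.Perm (preV (φ^[m]) β.1 k)) :=
    fun β => arbGal (K := K) galP1 ⊥ (φ^[m]) β.1 with hGb
  have hGβne : ∀ β : B, (Gb β).Nonempty := fun β =>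
    arbGal_nonempty (φ^[m]) β.1 hcommΦ (fun σ => hrβ β.1 β.2 σ)
  have hcovβ1 : ∀ (β : B) j, 1 ≤ coverNum D (Gb β) j := fun β j => one_le_coverNum (hGβne β) j
  have hlevβ : ∀ (β : B) j, levelCard (Gb β) j ≤ D ^ (D * scaleExp D j) := fun β =>
    levelCard_le_pow (φ^[m]) β.1 hD1 hfinΦ hcntΦ (Gb β) (arbGal_parent (φ^[m]) β.1 hcommΦ)
  have hcovβle : ∀ (β : B) j, coverNum D (Gb β) j ≤ D ^ (D * scaleExp D j) := fun β j =>
    le_trans (coverNum_le_levelCard (Gb β) j) (hlevβ β j)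
  have hlevcovβ : ∀ (β : B) j, levelCard (Gb β) j ≤ coverNum D (Gb β) j := fun β j => by
    haveI := preV_zero_subsingleton (φ^[m]) β.1
    exact levelCard_le_coverNum hD2 (Gb β) j
  set t : B → ℕ → ℝ := fun β j =>
    Real.log (coverNum D (Gb β) j : ℝ) / Real.log (1 / treeScale D j) with ht
  have hHD : ∀ β : B, Filter.liminf (t β) Filter.atTop = 0 ∧
      Filter.limsup (t β) Filter.atTop = 0 := by
    intro β
    obtain ⟨ℓ, hℓ, hβeq⟩ := β.2
    exact hsmall ℓ hℓ β.1 hβeq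
  have hlogD : 0 < Real.log (D.factorial : ℝ) := log_factorial_pos hD2
  have hlogd : 0 < Real.log (d.factorial : ℝ) := log_factorial_pos hd
  have hDlogpos : 0 < Real.log (D : ℝ) := Real.log_pos (by exact_mod_cast hD2)
  set M : ℝ := (D : ℝ) * Real.log (D : ℝ) / Real.log (D.factorial : ℝ) with hM
  have hM0 : 0 ≤ M := by positivity
  have ht0 : ∀ (β : B) j, 0 ≤ t β j := by
    intro β j
    apply div_nonneg
    · exact Real.log_nonneg (by exact_mod_cast hcovβ1 β j)
    · rw [log_one_div_treeScale]
      positivity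
  have htM : ∀ (β : B) j, t β j ≤ M := by
    intro β j
    rcases Nat.eq_zero_or_pos j with rfl | hj
    · have h0 : Real.log (1 / treeScale D 0) = 0 := by
        rw [log_one_div_treeScale]
        simp [scaleExp]
      rw [ht]
      simp only
      rw [h0, div_zero]
      exact hM0
    · have hden : 0 < Real.log (1 / treeScale D j) := by
        rw [log_one_div_treeScale]
        exact mul_pos (by exact_mod_cast scaleExp_pos hD1 hj) hlogD
      rw [ht]
      simp only
      rw [div_le_iff₀ hden]
      have hnum : Real.log (coverNum D (Gb β) j : ℝ) ≤
          (D : ℝ) * (scaleExp D j : ℝ) * Real.log (D : ℝ) := by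
        calc Real.log (coverNum D (Gb β) j : ℝ)
            ≤ Real.log ((D : ℝ) ^ (D * scaleExp D j)) := by
              apply Real.log_le_log (by exact_mod_cast hcovβ1 β j)
              exact_mod_cast hcovβle β j
          _ = ((D * scaleExp D j : ℕ) : ℝ) * Real.log (D : ℝ) := by
              rw [← Real.rpow_natCast]
              rw [Real.log_rpow (by positivity)]
          _ = (D : ℝ) * (scaleExp D j : ℝ) * Real.log (D : ℝ) := by
              push_cast
              ring
      rw [log_one_div_treeScale]
      have hexp : M * ((scaleExp D j : ℝ) * Real.log (D.factorial : ℝ)) =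
          (D : ℝ) * (scaleExp D j : ℝ) * Real.log (D : ℝ) := by
        rw [hM]
        field_simp
      rw [hexp]
      exact hnum
  have htend : ∀ β : B, Filter.Tendsto (t β) Filter.atTop (nhds 0) := by
    intro β
    refine tendsto_of_liminf_eq_limsup (hHD β).1 (hHD β).2 ?_ ?_
    · exact Filter.isBoundedUnder_of ⟨M, fun j => htM β j⟩
    · exact Filter.isBoundedUnder_of ⟨0, fun j => ht0 β j⟩
  set Jf : ℕ → ℕ := fun n => n / m + 1 with hJf
  have hJtend : Filter.Tendsto Jf Filter.atTop Filter.atTop := div_add_one_tendsto m hm0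
  have hGαne : Gα.Nonempty := arbGal_nonempty φ (P1K α) hcomm hrα
  have hcovα1 : ∀ n, 1 ≤ coverNum d Gα n := fun n => one_le_coverNum hGαne n
  have hchain : ∀ n : ℕ, coverNum d Gα n ≤ ∏ β : B, coverNum D (Gb β) (Jf n) := by
    intro n
    have hnJ : n ≤ m * Jf n := by
      have h1 : m * (n / m) + n % m = n := Nat.div_add_mod n m
      have h2 : n % m < m := Nat.mod_lt _ hm0
      have h3 : Jf n = n / m + 1 := rfl
      have h4 : m * (n / m + 1) = m * (n / m) + m := Nat.mul_succ m (n / m)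
      rw [h3]
      omega
    calc coverNum d Gα n ≤ levelCard Gα n := coverNum_le_levelCard Gα n
      _ ≤ ∏ β : B, levelCard (arbGal (K := K) galP1 ⊥ (φ^[m]) β.1) (Jf n) :=
          levelCard_decomp p q α m n (Jf n) hm0 hnJ hrβ hfin
      _ ≤ ∏ β : B, coverNum D (Gb β) (Jf n) :=
          Finset.prod_le_prod' (fun β _ => hlevcovβ β (Jf n))
  set Cm : ℝ := (d : ℝ) ^ (m + 1) * Real.log (D.factorial : ℝ) / Real.log (d.factorial : ℝ)
    with hCm
  set term : ℕ → ℝ := fun n =>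
    Real.log (coverNum d Gα n : ℝ) / Real.log (1 / treeScale d n) with hterm
  have hterm0 : ∀ n, 0 ≤ term n := by
    intro n
    apply div_nonneg
    · exact Real.log_nonneg (by exact_mod_cast hcovα1 n)
    · rw [log_one_div_treeScale]
      positivity
  have hkey : ∀ n : ℕ, 1 ≤ n → term n ≤ Cm * ∑ β : B, t β (Jf n) := by
    intro n hn
    have hLpos : 0 < Real.log (1 / treeScale d n) := by
      rw [log_one_div_treeScale]
      exact mul_pos (by exact_mod_cast scaleExp_pos hd1 hn) hlogd
    have hL'pos : 0 < Real.log (1 / treeScale D (Jf n)) := by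
      rw [log_one_div_treeScale]
      refine mul_pos ?_ hlogD
      have h5 : 1 ≤ Jf n := Nat.succ_le_succ (Nat.zero_le _)
      exact_mod_cast scaleExp_pos hD1 h5
    have hscale : Real.log (1 / treeScale D (Jf n)) ≤ Cm * Real.log (1 / treeScale d n) := by
      rw [log_one_div_treeScale, log_one_div_treeScale]
      have hc : m * Jf n ≤ (m + 1) + (n - 1) := by
        have h1 : m * (n / m) + n % m = n := Nat.div_add_mod n m
        have h2 : n % m < m := Nat.mod_lt _ hm0
        have h3 : Jf n = n / m + 1 := rfl
        have h4 : m * (n / m + 1) = m * (n / m) + m := Nat.mul_succ m (n / m)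
        rw [h3]
        omega
      have h1 : (scaleExp D (Jf n) : ℝ) ≤ (d : ℝ) ^ (m + 1) * (d : ℝ) ^ (n - 1) := by
        have ha : scaleExp D (Jf n) ≤ D ^ (Jf n) := scaleExp_le_pow hD2 _
        have hb : (D : ℕ) ^ (Jf n) = d ^ (m * Jf n) := by rw [hDdef, ← pow_mul]
        have hab : scaleExp D (Jf n) ≤ d ^ ((m + 1) + (n - 1)) :=
          le_trans (hb ▸ ha) (Nat.pow_le_pow_right hd1 hc)
        calc (scaleExp D (Jf n) : ℝ) ≤ ((d : ℝ)) ^ ((m + 1) + (n - 1)) := by exact_mod_cast hab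
          _ = (d : ℝ) ^ (m + 1) * (d : ℝ) ^ (n - 1) := pow_add _ _ _
      have h2 : ((d : ℝ)) ^ (n - 1) ≤ (scaleExp d n : ℝ) := by
        exact_mod_cast pow_le_scaleExp hn
      have hexpand : Cm * ((scaleExp d n : ℝ) * Real.log (d.factorial : ℝ)) =
          (d : ℝ) ^ (m + 1) * (scaleExp d n : ℝ) * Real.log (D.factorial : ℝ) := by
        rw [hCm]
        field_simp
      rw [hexpand]
      calc (scaleExp D (Jf n) : ℝ) * Real.log (D.factorial : ℝ)
          ≤ ((d : ℝ) ^ (m + 1) * (d : ℝ) ^ (n - 1)) * Real.log (D.factorial : ℝ) :=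
            mul_le_mul_of_nonneg_right h1 hlogD.le
        _ ≤ (d : ℝ) ^ (m + 1) * (scaleExp d n : ℝ) * Real.log (D.factorial : ℝ) := by
            refine mul_le_mul_of_nonneg_right ?_ hlogD.le
            exact mul_le_mul_of_nonneg_left h2 (by positivity)
    have hnum : Real.log (coverNum d Gα n : ℝ) ≤
        ∑ β : B, t β (Jf n) * Real.log (1 / treeScale D (Jf n)) := by
      have hle : (coverNum d Gα n : ℝ) ≤ ∏ β : B, (coverNum D (Gb β) (Jf n) : ℝ) := by
        have := hchain n
        exact_mod_cast this
      calc Real.log (coverNum d Gα n : ℝ)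
          ≤ Real.log (∏ β : B, (coverNum D (Gb β) (Jf n) : ℝ)) := by
            apply Real.log_le_log (by exact_mod_cast hcovα1 n) hle
        _ = ∑ β : B, Real.log ((coverNum D (Gb β) (Jf n) : ℝ)) := by
            apply Real.log_prod
            intro β _
            have h1 := hcovβ1 β (Jf n)
            have : (0 : ℝ) < (coverNum D (Gb β) (Jf n) : ℝ) := by exact_mod_cast h1
            exact ne_of_gt this
        _ = ∑ β : B, t β (Jf n) * Real.log (1 / treeScale D (Jf n)) := by
            apply Finset.sum_congr rfl
            intro β _
            rw [ht]
            simp only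
            rw [div_mul_cancel₀ _ (ne_of_gt hL'pos)]
    rw [hterm]
    simp only
    rw [div_le_iff₀ hLpos]
    calc Real.log (coverNum d Gα n : ℝ)
        ≤ ∑ β : B, t β (Jf n) * Real.log (1 / treeScale D (Jf n)) := hnum
      _ ≤ ∑ β : B, t β (Jf n) * (Cm * Real.log (1 / treeScale d n)) := by
          apply Finset.sum_le_sum
          intro β _
          exact mul_le_mul_of_nonneg_left hscale (ht0 β _)
      _ = (Cm * ∑ β : B, t β (Jf n)) * Real.log (1 / treeScale d n) := by
          rw [← Finset.sum_mul]
          ring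
  have hRHStend : Filter.Tendsto (fun n => Cm * ∑ β : B, t β (Jf n))
      Filter.atTop (nhds 0) := by
    have hsum : Filter.Tendsto (fun n => ∑ β : B, t β (Jf n)) Filter.atTop (nhds 0) := by
      have h := tendsto_finset_sum (Finset.univ : Finset B)
        (fun β _ => ((htend β).comp hJtend))
      simpa using h
    have h2 := hsum.const_mul Cm
    simpa using h2
  have htermtend : Filter.Tendsto term Filter.atTop (nhds 0) := by
    apply tendsto_of_tendsto_of_tendsto_of_le_of_le' tendsto_const_nhds hRHStend
    · exact Filter.eventually_atTop.2 ⟨0, fun n _ => hterm0 n⟩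
    · exact Filter.eventually_atTop.2 ⟨1, fun n hn => hkey n hn⟩
  exact ⟨htermtend.liminf_eq, htermtend.limsup_eq⟩
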